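/- Let μ be a probability measure on a set K, and let {A_i}_{i∈I} and {B_j}_{j∈J} be two measurable partitions of K such that each A_i is covered by at most M of the sets B_j. Then for any q ≥ 1, Σ_{i∈I} μ(A_i)^q ≤ M^{q−1} Σ_{j∈J} μ(B_j)^q. -/

import Mathlib

open MeasureTheory Filter Set Real
open scoped ENNReal Topology

noncomputable section

lemma tsum_rpow_le_rpow_tsum_aux {ι : Type*} [Countable ι] (f : ι → ℝ≥0∞) {q : ℝ} (hq : 1 ≤ q) :
    ∑' i, f i ^ q ≤ (∑' i, f i) ^ q := by
  have hq0 : 0 ≤ q := le_trans zero_le_one hq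
  rw [ENNReal.tsum_eq_iSup_sum (f := fun i => f i ^ q)]
  refine iSup_le fun s => ?_
  calc ∑ i ∈ s, f i ^ q ≤ (∑ i ∈ s, f i) ^ q := by
        induction s using Finset.cons_induction with
        | empty => simp [ENNReal.zero_rpow_of_pos (lt_of_lt_of_le zero_lt_one hq)]
        | cons a t ha ih =>
          rw [Finset.sum_cons, Finset.sum_cons]
          exact le_trans (add_le_add le_rfl ih) (ENNReal.add_rpow_le_rpow_add _ _ hq)
    _ ≤ (∑' i, f i) ^ q := ENNReal.rpow_le_rpow (ENNReal.sum_le_tsum s) hq0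

/-- If `{A_i}` and `{B_j}` are measurable partitions of a probability space and each `A_i`
is covered by at most `M` of the sets `B_j`, then for any `q ≥ 1`,
`∑ μ(A_i)^q ≤ M^{q-1} ∑ μ(B_j)^q`. -/
theorem partition_moment_sum_bound {Ω : Type*} [MeasurableSpace Ω] (μ : Measure Ω)
    [IsProbabilityMeasure μ] {I J : Type*} [Countable I] [Countable J]
    (A : I → Set Ω) (B : J → Set Ω)
    (hAmeas : ∀ i, MeasurableSet (A i)) (hBmeas : ∀ j, MeasurableSet (B j))
    (hAdisj : Pairwise (Function.onFun Disjoint A))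
    (hBdisj : Pairwise (Function.onFun Disjoint B))
    (hAcov : ⋃ i, A i = univ) (hBcov : ⋃ j, B j = univ)
    (M : ℕ) (hM : ∀ i, ∃ S : Finset J, S.card ≤ M ∧ A i ⊆ ⋃ j ∈ S, B j)
    (q : ℝ) (hq : 1 ≤ q) :
    ∑' i, (μ (A i)).toReal ^ q ≤ (M : ℝ) ^ (q - 1) * ∑' j, (μ (B j)).toReal ^ q := by
  have hq0 : 0 ≤ q := le_trans zero_le_one hq
  have hq1 : 0 ≤ q - 1 := by linarith
  -- Step 1: pointwise bound
  have key : ∀ i, μ (A i) ^ q ≤ (M : ℝ≥0∞) ^ (q - 1) * ∑' j, μ (A i ∩ B j) ^ q := by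
    intro i
    obtain ⟨S, hScard, hScov⟩ := hM i
    have hmeq : μ (A i) = ∑ j ∈ S, μ (A i ∩ B j) := by
      rw [← measure_biUnion_finset]
      · congr 1
        rw [← inter_iUnion₂]
        exact (inter_eq_left.2 hScov).symm
      · intro j _ k _ hjk
        exact (hBdisj hjk).mono inter_subset_right inter_subset_right
      · intro j _; exact (hAmeas i).inter (hBmeas j)
    rw [hmeq]
    calc (∑ j ∈ S, μ (A i ∩ B j)) ^ q
        ≤ (S.card : ℝ≥0∞) ^ (q - 1) * ∑ j ∈ S, μ (A i ∩ B j) ^ q :=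
          ENNReal.rpow_sum_le_const_mul_sum_rpow S _ hq
      _ ≤ (M : ℝ≥0∞) ^ (q - 1) * ∑' j, μ (A i ∩ B j) ^ q := by
          gcongr
          · exact ENNReal.sum_le_tsum S
  -- Step 2: ENNReal inequality
  have main : ∑' i, μ (A i) ^ q ≤ (M : ℝ≥0∞) ^ (q - 1) * ∑' j, μ (B j) ^ q := by
    calc ∑' i, μ (A i) ^ q
        ≤ ∑' i, (M : ℝ≥0∞) ^ (q - 1) * ∑' j, μ (A i ∩ B j) ^ q := ENNReal.tsum_le_tsum key
      _ = (M : ℝ≥0∞) ^ (q - 1) * ∑' i, ∑' j, μ (A i ∩ B j) ^ q := ENNReal.tsum_mul_left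
      _ = (M : ℝ≥0∞) ^ (q - 1) * ∑' j, ∑' i, μ (A i ∩ B j) ^ q := by rw [ENNReal.tsum_comm]
      _ ≤ (M : ℝ≥0∞) ^ (q - 1) * ∑' j, μ (B j) ^ q := by
          gcongr with j
          calc ∑' i, μ (A i ∩ B j) ^ q
              ≤ (∑' i, μ (A i ∩ B j)) ^ q := tsum_rpow_le_rpow_tsum_aux _ hq
            _ = μ (B j) ^ q := by
                congr 1
                rw [← measure_iUnion
                    (fun i k hik => (hAdisj hik).mono inter_subset_left inter_subset_left)
                    (fun i => (hAmeas i).inter (hBmeas j))]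
                rw [← iUnion_inter, hAcov, univ_inter]
  -- finiteness bounds
  have hboundA : ∑' i, μ (A i) ^ q ≤ 1 := by
    calc ∑' i, μ (A i) ^ q ≤ ∑' i, μ (A i) := by
          refine ENNReal.tsum_le_tsum fun i => ?_
          have := ENNReal.rpow_le_rpow_of_exponent_ge (x := μ (A i)) prob_le_one hq
          simpa using this
      _ = 1 := by rw [← measure_iUnion hAdisj hAmeas, hAcov, measure_univ]
  have hboundB : ∑' j, μ (B j) ^ q ≤ 1 := by
    calc ∑' j, μ (B j) ^ q ≤ ∑' j, μ (B j) := by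
          refine ENNReal.tsum_le_tsum fun j => ?_
          have := ENNReal.rpow_le_rpow_of_exponent_ge (x := μ (B j)) prob_le_one hq
          simpa using this
      _ = 1 := by rw [← measure_iUnion hBdisj hBmeas, hBcov, measure_univ]
  -- convert to real
  have hLHS : ∑' i, (μ (A i)).toReal ^ q = (∑' i, μ (A i) ^ q).toReal := by
    rw [ENNReal.tsum_toReal_eq fun i => ENNReal.rpow_ne_top_of_nonneg hq0 (measure_ne_top μ _)]
    exact tsum_congr fun i => (ENNReal.toReal_rpow _ _)
  have hRHS : (M : ℝ) ^ (q - 1) * ∑' j, (μ (B j)).toReal ^ q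
      = ((M : ℝ≥0∞) ^ (q - 1) * ∑' j, μ (B j) ^ q).toReal := by
    rw [ENNReal.toReal_mul,
      ENNReal.tsum_toReal_eq fun j => ENNReal.rpow_ne_top_of_nonneg hq0 (measure_ne_top μ _)]
    congr 1
    · rw [← ENNReal.toReal_rpow]; simp
    · exact tsum_congr fun j => ENNReal.toReal_rpow _ _
  rw [hLHS, hRHS]
  refine ENNReal.toReal_mono ?_ main
  exact ENNReal.mul_ne_top (ENNReal.rpow_ne_top_of_nonneg hq1 (ENNReal.natCast_ne_top M))
    (ne_top_of_le_ne_top ENNReal.one_ne_top hboundB)
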